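/- Let Λ : L(H) → L(K) be a channel between finite-dimensional complex Hilbert spaces, let (N, V) be a minimal Stinespring dilation of Λ and (N', V') any Stinespring dilation of Λ, with associated conjugate channels Λ^c(ρ) = tr_K[VρV*] and Λ̃^c(ρ) = tr_K[V'ρ(V')*]. If W : N → N' is an isometry with (1_K ⊗ W)V = V', then Φ ∘ Λ^c = Λ̃^c with Φ(σ) = WσW*, and ι ∘ Λ̃^c = Λ^c with ι(σ') = W*σ'W + tr[(1_{N'} − WW*)σ']·σ₀ for any fixed state σ₀ on N. In particular, any two conjugate channels of Λ are post-processing equivalent. -/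

import Mathlib

open Matrix
open scoped Kronecker ComplexOrder

noncomputable section

/-- The sandwich map `ρ ↦ U * ρ * V` on matrices, as a linear map. -/
def mSand {a b : Type*} [Fintype a] [Fintype b]
    (U : Matrix b a ℂ) (V : Matrix a b ℂ) :
    Matrix a a ℂ →ₗ[ℂ] Matrix b b ℂ where
  toFun ρ := U * ρ * V
  map_add' ρ σ := by simp [Matrix.mul_add, Matrix.add_mul]
  map_smul' c ρ := by simp [Matrix.mul_smul, Matrix.smul_mul]

/-- A quantum channel on matrix algebras: a completely positive (here: admitting a
Kraus decomposition, which is equivalent in finite dimension) trace-preserving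
linear map. -/
def MIsChannel {a b : Type*} [Fintype a] [Fintype b]
    (Λ : Matrix a a ℂ →ₗ[ℂ] Matrix b b ℂ) : Prop :=
  (∃ (n : ℕ) (V : Fin n → Matrix b a ℂ), ∀ ρ, Λ ρ = ∑ i, V i * ρ * (V i)ᴴ) ∧
  ∀ ρ, (Λ ρ).trace = ρ.trace

/-- Channel post-processing: `Λ₀ ⪯ Λ` iff `Λ₀ = Γ ∘ Λ` for some channel `Γ`. -/
def MChanPP {a b c : Type*} [Fintype a] [Fintype b] [Fintype c]
    (Λ₀ : Matrix a a ℂ →ₗ[ℂ] Matrix c c ℂ) (Λ : Matrix a a ℂ →ₗ[ℂ] Matrix b b ℂ) : Prop :=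
  ∃ Γ : Matrix b b ℂ →ₗ[ℂ] Matrix c c ℂ, MIsChannel Γ ∧ Λ₀ = Γ ∘ₗ Λ

/-- Post-processing equivalence of channels. -/
def MChanEquiv {a b c : Type*} [Fintype a] [Fintype b] [Fintype c]
    (Λ₀ : Matrix a a ℂ →ₗ[ℂ] Matrix c c ℂ) (Λ : Matrix a a ℂ →ₗ[ℂ] Matrix b b ℂ) : Prop :=
  MChanPP Λ₀ Λ ∧ MChanPP Λ Λ₀

/-- A discrete observable (POVM) on a matrix algebra. -/
def MIsPOVM {a Ω : Type*} [Fintype a] [DecidableEq a] [Fintype Ω]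
    (A : Ω → Matrix a a ℂ) : Prop :=
  (∀ j, (A j).PosSemidef) ∧ ∑ j, A j = (1 : Matrix a a ℂ)

/-- A projection-valued measure on a matrix algebra. -/
def MIsPVM {a Ω : Type*} [Fintype a] [DecidableEq a] [Fintype Ω]
    (P : Ω → Matrix a a ℂ) : Prop :=
  (∀ j, (P j)ᴴ = P j ∧ P j * P j = P j) ∧ ∑ j, P j = (1 : Matrix a a ℂ)

/-- `(μ, P, J)` is a Naimark dilation of the observable `A`. -/
def MIsNaimark {ι μ Ω : Type*} [Fintype ι] [DecidableEq ι] [Fintype μ] [DecidableEq μ]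
    [Fintype Ω] (A : Ω → Matrix ι ι ℂ) (P : Ω → Matrix μ μ ℂ) (J : Matrix μ ι ℂ) : Prop :=
  MIsPVM P ∧ Jᴴ * J = (1 : Matrix ι ι ℂ) ∧ ∀ j, A j = Jᴴ * (P j * J)

/-- The least disturbing channel `ρ ↦ ∑ j, P j J ρ J* P j` of a Naimark dilation. -/
def mLeastDist {ι μ Ω : Type*} [Fintype ι] [Fintype μ] [Fintype Ω]
    (P : Ω → Matrix μ μ ℂ) (J : Matrix μ ι ℂ) :
    Matrix ι ι ℂ →ₗ[ℂ] Matrix μ μ ℂ :=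
  ∑ j, mSand (P j * J) (Jᴴ * P j)

/-- Partial trace over the first (left) tensor factor. -/
def ptraceLeft {a b : Type*} [Fintype a]
    (X : Matrix (a × b) (a × b) ℂ) : Matrix b b ℂ :=
  Matrix.of fun n n' => ∑ c : a, X (c, n) (c, n')

end

section AuxStmt16
open Matrix
open scoped Kronecker

set_option linter.unusedSectionVars false

variable {κ ν ν' : Type*} [Fintype κ] [DecidableEq κ] [Fintype ν] [DecidableEq ν]
  [Fintype ν'] [DecidableEq ν']

theorem aux_ptr_conj (W : Matrix ν' ν ℂ) (X : Matrix (κ × ν) (κ × ν) ℂ) :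
    ptraceLeft (((1 : Matrix κ κ ℂ) ⊗ₖ W) * X * ((1 : Matrix κ κ ℂ) ⊗ₖ W)ᴴ)
      = W * ptraceLeft X * Wᴴ := by
  ext n n'
  simp only [ptraceLeft, Matrix.mul_apply, of_apply, conjTranspose_apply,
    kroneckerMap_apply, Matrix.one_apply, Fintype.sum_prod_type]
  simp only [ite_mul, mul_ite, one_mul, zero_mul, mul_zero, mul_one,
    apply_ite (star : ℂ → ℂ), star_zero,
    Finset.sum_ite_irrel, Finset.sum_const_zero,
    Finset.sum_ite_eq, Finset.sum_ite_eq', Finset.mem_univ, if_true]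
  rw [Finset.sum_comm]
  refine Finset.sum_congr rfl fun m _ => ?_
  rw [← Finset.sum_mul]
  congr 1
  rw [Finset.sum_comm]
  exact Finset.sum_congr rfl fun x _ => (Finset.mul_sum _ _ _).symm

theorem aux_sum_std (M : Matrix ν' ν' ℂ) :
    ∑ j : ν, ∑ i : ν', single j i (1:ℂ) * M * (single j i (1:ℂ))ᴴ
      = M.trace • (1 : Matrix ν ν ℂ) := by
  ext a b
  simp only [Matrix.sum_apply, Matrix.mul_apply, single, of_apply,
    conjTranspose_apply, Matrix.trace, Matrix.diag, Matrix.smul_apply, Matrix.one_apply,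
    apply_ite (star : ℂ → ℂ), star_zero, star_one, ite_mul, mul_ite, one_mul, zero_mul,
    mul_zero, mul_one, Finset.sum_ite_irrel, Finset.sum_const_zero,
    Finset.sum_ite_eq, Finset.sum_ite_eq', Finset.mem_univ, if_true, smul_eq_mul]
  by_cases h : a = b
  · subst h
    simp [ite_and, Finset.sum_ite_eq, Finset.sum_ite_eq']
  · simp [ite_and, Finset.sum_ite_eq, Finset.sum_ite_eq', h, Ne.symm h,
      fun x : ν => show ¬(x = b ∧ x = a) from fun ⟨h1, h2⟩ => h (h2.symm.trans h1)]

/-- The recovery map `σ ↦ Wᴴ σ W + tr[(1 - W Wᴴ) σ] • σ₀` as a linear map. -/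
noncomputable def iotaMap (W : Matrix ν' ν ℂ) (σ₀ : Matrix ν ν ℂ) :
    Matrix ν' ν' ℂ →ₗ[ℂ] Matrix ν ν ℂ :=
  mSand Wᴴ W +
    ((Matrix.traceLinearMap ν' ℂ ℂ ∘ₗ mSand (1 - W * Wᴴ) 1).smulRight σ₀)

theorem iotaMap_apply (W : Matrix ν' ν ℂ) (σ₀ : Matrix ν ν ℂ) (σ : Matrix ν' ν' ℂ) :
    iotaMap W σ₀ σ = Wᴴ * σ * W + (((1 - W * Wᴴ) * σ).trace) • σ₀ := by
  simp [iotaMap, mSand, Matrix.traceLinearMap]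

end AuxStmt16

/-- Conjugate channels of a channel `Λ` arising from different Stinespring
dilations `(N, V)` (minimal) and `(N', V')`, related by an isometry `W` with
`(1 ⊗ W) V = V'`, satisfy `Φ ∘ Λᶜ = Λ̃ᶜ` and `ι ∘ Λ̃ᶜ = Λᶜ`; in particular the two
conjugate channels are post-processing equivalent. -/
theorem stmt_16 {ι κ ν ν' : Type*} [Fintype ι] [DecidableEq ι] [Fintype κ] [DecidableEq κ]
    [Fintype ν] [DecidableEq ν] [Fintype ν'] [DecidableEq ν']
    (Λ : Matrix ι ι ℂ →ₗ[ℂ] Matrix κ κ ℂ) (hΛ : MIsChannel Λ)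
    (Λd : Matrix κ κ ℂ →ₗ[ℂ] Matrix ι ι ℂ)
    (hΛd : ∀ (ρ : Matrix ι ι ℂ) (B : Matrix κ κ ℂ), (Λ ρ * B).trace = (ρ * Λd B).trace)
    (V : Matrix (κ × ν) ι ℂ) (hV : Vᴴ * V = (1 : Matrix ι ι ℂ))
    (hdil : ∀ B : Matrix κ κ ℂ, Λd B = Vᴴ * ((B ⊗ₖ (1 : Matrix ν ν ℂ)) * V))
    (hmin : Submodule.span ℂ {x : (κ × ν) → ℂ | ∃ (B : Matrix κ κ ℂ) (φ : ι → ℂ),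
      x = ((B ⊗ₖ (1 : Matrix ν ν ℂ)) * V).mulVec φ} = ⊤)
    (V' : Matrix (κ × ν') ι ℂ) (hV' : V'ᴴ * V' = (1 : Matrix ι ι ℂ))
    (hdil' : ∀ B : Matrix κ κ ℂ, Λd B = V'ᴴ * ((B ⊗ₖ (1 : Matrix ν' ν' ℂ)) * V'))
    (W : Matrix ν' ν ℂ) (hW : Wᴴ * W = (1 : Matrix ν ν ℂ))
    (hWV : ((1 : Matrix κ κ ℂ) ⊗ₖ W) * V = V')
    (σ₀ : Matrix ν ν ℂ) (hσ₀pos : σ₀.PosSemidef) (hσ₀tr : σ₀.trace = 1) :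
    (∀ ρ : Matrix ι ι ℂ,
      ptraceLeft (V' * ρ * V'ᴴ) = W * ptraceLeft (V * ρ * Vᴴ) * Wᴴ) ∧
    (∀ ρ : Matrix ι ι ℂ,
      ptraceLeft (V * ρ * Vᴴ) =
        Wᴴ * ptraceLeft (V' * ρ * V'ᴴ) * W +
        (((1 - W * Wᴴ) * ptraceLeft (V' * ρ * V'ᴴ)).trace) • σ₀) ∧
    (∃ Γ : Matrix ν ν ℂ →ₗ[ℂ] Matrix ν' ν' ℂ, MIsChannel Γ ∧
      ∀ ρ : Matrix ι ι ℂ, ptraceLeft (V' * ρ * V'ᴴ) = Γ (ptraceLeft (V * ρ * Vᴴ))) ∧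
    (∃ Γ' : Matrix ν' ν' ℂ →ₗ[ℂ] Matrix ν ν ℂ, MIsChannel Γ' ∧
      ∀ ρ : Matrix ι ι ℂ, ptraceLeft (V * ρ * Vᴴ) = Γ' (ptraceLeft (V' * ρ * V'ᴴ))) := by
  classical
  have hQ : (W * Wᴴ) * (W * Wᴴ) = W * Wᴴ := by
    rw [Matrix.mul_assoc, ← Matrix.mul_assoc Wᴴ W, hW, Matrix.one_mul]
  have hPP : ((1 : Matrix ν' ν' ℂ) - W * Wᴴ) * (1 - W * Wᴴ) = 1 - W * Wᴴ := by
    rw [Matrix.sub_mul, Matrix.one_mul, Matrix.mul_sub, Matrix.mul_one, hQ, sub_self, sub_zero]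
  have hPH : ((1 : Matrix ν' ν' ℂ) - W * Wᴴ)ᴴ = 1 - W * Wᴴ := by
    simp [conjTranspose_sub, conjTranspose_mul]
  have h1 : ∀ ρ : Matrix ι ι ℂ,
      ptraceLeft (V' * ρ * V'ᴴ) = W * ptraceLeft (V * ρ * Vᴴ) * Wᴴ := by
    intro ρ
    rw [← hWV, conjTranspose_mul]
    rw [show ((1 : Matrix κ κ ℂ) ⊗ₖ W) * V * ρ * (Vᴴ * ((1 : Matrix κ κ ℂ) ⊗ₖ W)ᴴ)
        = ((1 : Matrix κ κ ℂ) ⊗ₖ W) * (V * ρ * Vᴴ) * ((1 : Matrix κ κ ℂ) ⊗ₖ W)ᴴ from by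
      simp only [Matrix.mul_assoc]]
    exact aux_ptr_conj W _
  have h2 : ∀ ρ : Matrix ι ι ℂ,
      ptraceLeft (V * ρ * Vᴴ) =
        Wᴴ * ptraceLeft (V' * ρ * V'ᴴ) * W +
        (((1 - W * Wᴴ) * ptraceLeft (V' * ρ * V'ᴴ)).trace) • σ₀ := by
    intro ρ
    rw [h1 ρ]
    set T := ptraceLeft (V * ρ * Vᴴ) with hT
    have hzero : ((1 : Matrix ν' ν' ℂ) - W * Wᴴ) * (W * T * Wᴴ) = 0 := by
      rw [show ((1 : Matrix ν' ν' ℂ) - W * Wᴴ) * (W * T * Wᴴ)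
          = (((1 : Matrix ν' ν' ℂ) - W * Wᴴ) * W) * (T * Wᴴ) from by
        simp only [Matrix.mul_assoc]]
      rw [Matrix.sub_mul, Matrix.one_mul, Matrix.mul_assoc, hW, Matrix.mul_one,
        sub_self, Matrix.zero_mul]
    rw [hzero, Matrix.trace_zero, zero_smul, add_zero]
    simp only [Matrix.mul_assoc]
    rw [hW, Matrix.mul_one, ← Matrix.mul_assoc, hW, Matrix.one_mul]
  refine ⟨h1, h2, ⟨mSand W Wᴴ, ⟨⟨1, fun _ => W, fun ρ => by simp [mSand]⟩, fun ρ => ?_⟩,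
    fun ρ => by rw [h1 ρ]; rfl⟩, ?_⟩
  · show (W * ρ * Wᴴ).trace = ρ.trace
    rw [Matrix.trace_mul_cycle, hW, Matrix.one_mul]
  · -- the recovery channel
    set P : Matrix ν' ν' ℂ := 1 - W * Wᴴ with hPdef
    set S : Matrix ν ν ℂ := (open scoped MatrixOrder in CFC.sqrt σ₀) with hSdef
    have hSH : Sᴴ = S := open scoped MatrixOrder in (CFC.sqrt_nonneg σ₀).posSemidef.1
    have hSS : S * S = σ₀ := open scoped MatrixOrder in CFC.sqrt_mul_sqrt_self σ₀ hσ₀pos.nonneg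
    -- Kraus operators indexed by Option (ν × ν')
    set K : Option (ν × ν') → Matrix ν ν' ℂ :=
      fun o => o.elim Wᴴ (fun p => S * single p.1 p.2 (1 : ℂ) * P) with hK
    have hKraus : ∀ σ : Matrix ν' ν' ℂ,
        iotaMap W σ₀ σ = ∑ o : Option (ν × ν'), K o * σ * (K o)ᴴ := by
      intro σ
      rw [Fintype.sum_option, iotaMap_apply]
      congr 1
      · simp [hK, conjTranspose_conjTranspose]
      · have hterm : ∀ p : ν × ν',
            K (some p) * σ * (K (some p))ᴴ
              = S * (single p.1 p.2 (1 : ℂ) * (P * σ * P)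
                  * (single p.1 p.2 (1 : ℂ))ᴴ) * S := by
          intro p
          simp only [hK, Option.elim, conjTranspose_mul, hPH, hSH, Matrix.mul_assoc]
        rw [Finset.sum_congr rfl fun p _ => hterm p]
        rw [← Finset.sum_mul, ← Finset.mul_sum]
        rw [show (∑ p : ν × ν', single p.1 p.2 (1 : ℂ) * (P * σ * P)
              * (single p.1 p.2 (1 : ℂ))ᴴ) = (P * σ * P).trace • 1 from by
          rw [← aux_sum_std (P * σ * P)]; exact Fintype.sum_prod_type ..]
        have htr : (P * σ * P).trace = (P * σ).trace := by
          rw [Matrix.trace_mul_cycle, hPP]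
        rw [htr, mul_smul_comm, smul_mul_assoc, Matrix.mul_one, hSS, ← hPdef]
    refine ⟨iotaMap W σ₀, ⟨⟨Fintype.card (Option (ν × ν')),
      fun i => K ((Fintype.equivFin (Option (ν × ν'))).symm i), fun σ => ?_⟩, fun σ => ?_⟩,
      fun ρ => by rw [h2 ρ, iotaMap_apply]⟩
    · rw [hKraus σ]
      exact (Equiv.sum_comp (Fintype.equivFin (Option (ν × ν'))).symm
        (fun o => K o * σ * (K o)ᴴ)).symm
    · rw [iotaMap_apply, Matrix.trace_add, Matrix.trace_smul, hσ₀tr, smul_eq_mul, mul_one,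
        Matrix.trace_mul_cycle, Matrix.sub_mul, Matrix.one_mul, Matrix.trace_sub]
      ring
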